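/- Let K be the inverse limit of finite connected graphs with connected epimorphic bonding maps f^n_m, with projections f_n : K → K_n. Then for every n and every x ∈ K_n, the clopen set f_n^{-1}(x) is a connected subset of the topological graph K. Consequently K is locally connected as a topological graph, i.e., admits a basis of connected open sets. -/
import Mathlib


/-- A subset `X` of a graph with edge relation `R` is connected if for all nonempty
`U₁, U₂ ⊆ X` with `X = U₁ ∪ U₂` there is an edge between `U₁` and `U₂`. -/
def FinConn {V : Type*} (R : V → V → Prop) (X : Set V) : Prop :=
  ∀ U₁ U₂ : Set V, U₁ ⊆ X → U₂ ⊆ X → U₁.Nonempty → U₂.Nonempty → X = U₁ ∪ U₂ →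
    ∃ x₁ ∈ U₁, ∃ x₂ ∈ U₂, R x₁ x₂

/-- A graph epimorphism: a homomorphism surjective on vertices and on edges. -/
def IsEpi {V W : Type*} (RB : V → V → Prop) (RA : W → W → Prop) (f : V → W) : Prop :=
  (∀ b b', RB b b' → RA (f b) (f b')) ∧ Function.Surjective f ∧
    (∀ a a', RA a a' → ∃ b b', RB b b' ∧ f b = a ∧ f b' = a')

/-- A connected epimorphism: an epimorphism such that the preimage of every connected
subset is connected. -/
def IsConnEpi {V W : Type*} (RB : V → V → Prop) (RA : W → W → Prop) (f : V → W) : Prop :=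
  IsEpi RB RA f ∧ ∀ X : Set W, FinConn RA X → FinConn RB (f ⁻¹' X)

/-- Connectedness of a subset of a topological graph. -/
def TopConn {K : Type*} [TopologicalSpace K] (R : K → K → Prop) (X : Set K) : Prop :=
  ∀ U₁ U₂ : Set K, IsOpen U₁ → IsOpen U₂ → (X ∩ U₁).Nonempty → (X ∩ U₂).Nonempty →
    X ⊆ U₁ ∪ U₂ → ∃ x₁ ∈ X ∩ U₁, ∃ x₂ ∈ X ∩ U₂, R x₁ x₂

/-- The inverse limit of a sequence of (finite, discrete) sets with bonding maps. -/
def InvLim (K : ℕ → Type) (f : ∀ n, K (n+1) → K n) : Type :=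
  {x : ∀ n, K n // ∀ n, f n (x (n+1)) = x n}

/-- The inverse-limit topology, where each `K n` carries the discrete topology. -/
instance InvLim.topologicalSpace (K : ℕ → Type) (f : ∀ n, K (n+1) → K n) :
    TopologicalSpace (InvLim K f) :=
  @instTopologicalSpaceSubtype _ _ (@Pi.topologicalSpace ℕ K (fun _ => ⊥))

/-- The coordinatewise edge relation on the inverse limit. -/
def limR {K : ℕ → Type} (R : ∀ n, K n → K n → Prop) {f : ∀ n, K (n+1) → K n}
    (x y : InvLim K f) : Prop :=
  ∀ n, R n (x.1 n) (y.1 n)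

section Aux

variable {K : ℕ → Type} {f : ∀ n, K (n+1) → K n}

/-- Iterated bonding map. -/
def downTo (f : ∀ n, K (n+1) → K n) : ∀ (k j : ℕ), K (j + k) → K j
  | 0, _ => id
  | k+1, j => fun x => downTo f k j (f (j+k) x)

lemma K_cast_succ {a b : ℕ} (e : a = b) (x : K (a+1)) :
    f b (cast (congrArg K (by rw [e] : a+1 = b+1)) x) = cast (congrArg K e) (f a x) := by
  subst e; rfl

lemma f_downTo : ∀ (k j : ℕ) (x : K ((j+1) + k)),
    f j (downTo f k (j+1) x)
      = downTo f (k+1) j (cast (congrArg K (Nat.succ_add_eq_add_succ j k)) x)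
  | 0, j, x => by rfl
  | k+1, j, x => by
      show f j (downTo f k (j+1) (f ((j+1)+k) x)) = _
      rw [f_downTo k j (f ((j+1)+k) x)]
      show downTo f (k+1) j _ = downTo f (k+1) j (f (j+(k+1)) (cast _ x))
      exact congrArg (downTo f (k+1) j)
        (K_cast_succ (Nat.succ_add_eq_add_succ j k) x).symm

noncomputable def upSeq (hs : ∀ n, Function.Surjective (f n)) (m : ℕ) (b : K m) : ∀ k, K (m+k)
  | 0 => b
  | k+1 => (hs (m+k) (upSeq hs m b k)).choose

lemma f_upSeq (hs : ∀ n, Function.Surjective (f n)) (m : ℕ) (b : K m) (k : ℕ) :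
    f (m+k) (upSeq hs m b (k+1)) = upSeq hs m b k :=
  (hs (m+k) (upSeq hs m b k)).choose_spec

lemma extend (hs : ∀ n, Function.Surjective (f n)) (m : ℕ) (b : K m) :
    ∃ x : InvLim K f, x.1 m = b := by
  refine ⟨⟨fun j => downTo f m j (cast (congrArg K (Nat.add_comm m j)) (upSeq hs m b j)), ?_⟩, ?_⟩
  · intro j
    show f j (downTo f m (j+1) (cast (congrArg K (Nat.add_comm m (j+1))) (upSeq hs m b (j+1))))
      = downTo f m j (cast (congrArg K (Nat.add_comm m j)) (upSeq hs m b j))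
    rw [f_downTo (f := f) m j (cast (congrArg K (Nat.add_comm m (j+1))) (upSeq hs m b (j+1)))]
    rw [cast_cast]
    show downTo f m j (f (j+m) (cast _ (upSeq hs m b (j+1)))) = _
    refine congrArg (downTo f m j) ?_
    have h1 := K_cast_succ (f := f) (Nat.add_comm m j) (upSeq hs m b (j+1))
    rw [f_upSeq hs m b j] at h1
    exact h1
  · show downTo f m m (cast _ (upSeq hs m b m)) = b
    have h2 : ∀ k, downTo f k m (upSeq hs m b k) = b := by
      intro k
      induction k with
      | zero => rfl
      | succ k ih =>
        show downTo f k m (f (m+k) (upSeq hs m b (k+1))) = b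
        rw [f_upSeq hs m b k]; exact ih
    exact h2 m


lemma finConn_singleton {V : Type*} {R : V → V → Prop} (h : ∀ x, R x x) (a : V) :
    FinConn R {a} := by
  intro U₁ U₂ h₁ h₂ hne₁ hne₂ _
  obtain ⟨y₁, hy₁⟩ := hne₁
  obtain ⟨y₂, hy₂⟩ := hne₂
  refine ⟨y₁, hy₁, y₂, hy₂, ?_⟩
  have e₁ : y₁ = a := h₁ hy₁
  have e₂ : y₂ = a := h₂ hy₂
  rw [e₁, e₂]; exact h a

lemma isConnEpi_id {V : Type*} {R : V → V → Prop} : IsConnEpi R R id := by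
  refine ⟨⟨fun _ _ h => h, Function.surjective_id, fun a a' h => ⟨a, a', h, rfl, rfl⟩⟩, ?_⟩
  intro X hX
  simpa using hX

lemma isConnEpi_comp {A B C : Type*} {RA : A → A → Prop} {RB : B → B → Prop}
    {RC : C → C → Prop} {g : B → A} {h : C → B}
    (hg : IsConnEpi RB RA g) (hh : IsConnEpi RC RB h) : IsConnEpi RC RA (g ∘ h) := by
  obtain ⟨⟨ghom, gsur, glift⟩, gconn⟩ := hg
  obtain ⟨⟨hhom, hsur, hlift⟩, hconn⟩ := hh
  refine ⟨⟨fun c c' e => ghom _ _ (hhom _ _ e), gsur.comp hsur, ?_⟩, ?_⟩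
  · intro a a' e
    obtain ⟨b, b', eb, f1, f2⟩ := glift a a' e
    obtain ⟨c, c', ec, g1, g2⟩ := hlift b b' eb
    exact ⟨c, c', ec, by simp [Function.comp, g1, f1], by simp [Function.comp, g2, f2]⟩
  · intro X hX
    have : (g ∘ h) ⁻¹' X = h ⁻¹' (g ⁻¹' X) := rfl
    rw [this]
    exact hconn _ (gconn X hX)

variable {K : ℕ → Type} {f : ∀ n, K (n+1) → K n} {R : ∀ n, K n → K n → Prop}

lemma exists_proj (hf : ∀ n, IsConnEpi (R (n+1)) (R n) (f n)) {n M : ℕ} (h : n ≤ M) :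
    ∃ g : K M → K n, IsConnEpi (R M) (R n) g ∧ ∀ x : InvLim K f, g (x.1 M) = x.1 n := by
  induction M, h using Nat.le_induction with
  | base => exact ⟨id, isConnEpi_id, fun _ => rfl⟩
  | succ M hM ih =>
    obtain ⟨g, hg, hspec⟩ := ih
    refine ⟨g ∘ f M, isConnEpi_comp hg (hf M), fun x => ?_⟩
    show g (f M (x.1 (M+1))) = x.1 n
    rw [x.2 M]; exact hspec x

lemma coord_eq {x y : InvLim K f} {j : ℕ} : ∀ {M : ℕ}, j ≤ M → x.1 M = y.1 M → x.1 j = y.1 j := by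
  intro M h
  induction M, h using Nat.le_induction with
  | base => exact fun e => e
  | succ M hM ih =>
    intro e
    exact ih (by rw [← x.2 M, ← y.2 M, e])

lemma cyl_isOpen (m : ℕ) (b : K m) : IsOpen {x : InvLim K f | x.1 m = b} := by
  letI : ∀ i, TopologicalSpace (K i) := fun _ => ⊥
  haveI : ∀ i, DiscreteTopology (K i) := fun _ => ⟨rfl⟩
  have hc : Continuous (fun x : InvLim K f => x.1 m) :=
    (continuous_apply m).comp continuous_subtype_val
  exact (isOpen_discrete {b}).preimage hc

lemma fiber_isCompact [∀ i, Fintype (K i)] (n : ℕ) (a : K n) :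
    IsCompact {x : InvLim K f | x.1 n = a} := by
  letI : ∀ i, TopologicalSpace (K i) := fun _ => ⊥
  haveI : ∀ i, DiscreteTopology (K i) := fun _ => ⟨rfl⟩
  haveI : ∀ i, Finite (K i) := fun i => Finite.of_fintype _
  haveI : CompactSpace (∀ i, K i) := inferInstance
  have hcl : IsClosed {x : ∀ i, K i | ∀ i, f i (x (i+1)) = x i} := by
    have he : {x : ∀ i, K i | ∀ i, f i (x (i+1)) = x i}
        = ⋂ i, {x : ∀ i, K i | f i (x (i+1)) = x i} := by ext z; simp
    rw [he]
    refine isClosed_iInter fun i => isClosed_eq ?_ (continuous_apply i)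
    exact continuous_of_discreteTopology.comp (continuous_apply (i+1))
  haveI : CompactSpace (InvLim K f) := isCompact_iff_compactSpace.mp hcl.isCompact
  have hcl2 : IsClosed {x : InvLim K f | x.1 n = a} :=
    isClosed_eq ((continuous_apply n).comp continuous_subtype_val) continuous_const
  exact hcl2.isCompact

lemma exists_cyl_subset {U : Set (InvLim K f)} (hU : IsOpen U) {x : InvLim K f} (hx : x ∈ U) :
    ∃ m, {y : InvLim K f | y.1 m = x.1 m} ⊆ U := by
  letI : ∀ i, TopologicalSpace (K i) := fun _ => ⊥
  haveI : ∀ i, DiscreteTopology (K i) := fun _ => ⟨rfl⟩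
  obtain ⟨V, hV, hUV⟩ := isOpen_induced_iff.mp hU
  have hxV : x.1 ∈ V := by rw [← hUV] at hx; exact hx
  obtain ⟨I, u, hIu, hsub⟩ := isOpen_pi_iff.mp hV x.1 hxV
  refine ⟨I.sup id, fun y hy => ?_⟩
  rw [← hUV]
  apply hsub
  intro i hi
  have he : y.1 i = x.1 i := coord_eq (Finset.le_sup (f := id) hi) hy
  rw [he]; exact (hIu i hi).2

lemma edge_lift (hf : ∀ n, IsConnEpi (R (n+1)) (R n) (f n)) (M : ℕ) {b₁ b₂ : K M}
    (h : R M b₁ b₂) :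
    ∃ x₁ x₂ : InvLim K f, x₁.1 M = b₁ ∧ x₂.1 M = b₂ ∧ limR R x₁ x₂ := by
  let K' : ℕ → Type := fun j => {p : K j × K j // R j p.1 p.2}
  let f' : ∀ j, K' (j+1) → K' j := fun j p => ⟨(f j p.1.1, f j p.1.2), (hf j).1.1 _ _ p.2⟩
  have hs : ∀ j, Function.Surjective (f' j) := by
    rintro j ⟨⟨a, a'⟩, e⟩
    obtain ⟨b, b', eb, h1, h2⟩ := (hf j).1.2.2 a a' e
    refine ⟨⟨(b, b'), eb⟩, ?_⟩
    simp only [f', h1, h2]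
  obtain ⟨x', hx'⟩ := extend (f := f') hs M ⟨(b₁, b₂), h⟩
  refine ⟨⟨fun j => (x'.1 j).1.1, fun j => congrArg (fun p => p.1.1) (x'.2 j)⟩,
          ⟨fun j => (x'.1 j).1.2, fun j => congrArg (fun p => p.1.2) (x'.2 j)⟩,
          congrArg (fun p => p.1.1) hx', congrArg (fun p => p.1.2) hx',
          fun j => (x'.1 j).2⟩

end Aux

/-- in the inverse limit of finite connected graphs with connected
epimorphic bonding maps, every set `f_n⁻¹(x)` is a connected subset, and consequently
the limit is locally connected as a topological graph (it has a basis of connected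
open sets). -/
theorem invLim_fibers_connected_and_locally_connected
    (K : ℕ → Type) [∀ n, Fintype (K n)]
    (R : ∀ n, K n → K n → Prop)
    (hrefl : ∀ n (x : K n), R n x x) (hsymm : ∀ n (x y : K n), R n x y → R n y x)
    (hconn : ∀ n, FinConn (R n) Set.univ)
    (f : ∀ n, K (n+1) → K n) (hf : ∀ n, IsConnEpi (R (n+1)) (R n) (f n)) :
    (∀ (n : ℕ) (a : K n),
        TopConn (limR R) {x : InvLim K f | x.1 n = a}) ∧
    (∀ (x : InvLim K f) (U : Set (InvLim K f)), IsOpen U → x ∈ U →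
        ∃ V : Set (InvLim K f), IsOpen V ∧ x ∈ V ∧ V ⊆ U ∧ TopConn (limR R) V) := by
  classical
  have hsurj : ∀ j, Function.Surjective (f j) := fun j => (hf j).1.2.1
  have part1 : ∀ (n : ℕ) (a : K n), TopConn (limR R) {x : InvLim K f | x.1 n = a} := by
    intro n a U₁ U₂ hU₁ hU₂ hne₁ hne₂ hcov
    set X := {x : InvLim K f | x.1 n = a} with hXdef
    obtain ⟨p₁, hp₁X, hp₁U⟩ := hne₁
    obtain ⟨p₂, hp₂X, hp₂U⟩ := hne₂
    by_cases hmix : ∃ x, x ∈ X ∧ x ∈ U₁ ∧ x ∈ U₂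
    · obtain ⟨x, hx, h1, h2⟩ := hmix
      exact ⟨x, ⟨hx, h1⟩, x, ⟨hx, h2⟩, fun j => hrefl j _⟩
    · have hXc : IsCompact X := fiber_isCompact n a
      have hb : ∀ x ∈ X, ∃ m, {y : InvLim K f | y.1 m = x.1 m} ⊆ U₁ ∨
          {y : InvLim K f | y.1 m = x.1 m} ⊆ U₂ := by
        intro x hx
        rcases hcov hx with h | h
        · obtain ⟨m, hm⟩ := exists_cyl_subset hU₁ h; exact ⟨m, Or.inl hm⟩
        · obtain ⟨m, hm⟩ := exists_cyl_subset hU₂ h; exact ⟨m, Or.inr hm⟩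
      choose! mfun hmfun using hb
      obtain ⟨t, htX, htcov⟩ := hXc.elim_nhds_subcover
        (fun x => {y : InvLim K f | y.1 (mfun x) = x.1 (mfun x)})
        (fun x _ => (cyl_isOpen _ _).mem_nhds rfl)
      set M := max n (t.sup mfun) with hM
      obtain ⟨g, hgepi, hgspec⟩ := exists_proj (f := f) hf (le_max_left n (t.sup mfun))
      have hAX : ∀ b : K M, g b = a → {y : InvLim K f | y.1 M = b} ⊆ X := by
        intro b hgb y hy
        show y.1 n = a
        rw [← hgspec y, hy, hgb]
      have hcylU : ∀ b : K M, g b = a →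
          ({y : InvLim K f | y.1 M = b} ⊆ U₁ ∨ {y : InvLim K f | y.1 M = b} ⊆ U₂) := by
        intro b hgb
        obtain ⟨y, hy⟩ := extend hsurj M b
        have hyX : y ∈ X := hAX b hgb hy
        have hyc := htcov hyX
        simp only [Set.mem_iUnion] at hyc
        obtain ⟨x, hxt, hyx⟩ := hyc
        have hmle : mfun x ≤ M := le_trans (Finset.le_sup hxt) (le_max_right n _)
        have hsub : {z : InvLim K f | z.1 M = b} ⊆
            {z : InvLim K f | z.1 (mfun x) = x.1 (mfun x)} := by
          intro z hz
          have hzy : z.1 (mfun x) = y.1 (mfun x) := coord_eq hmle (by rw [hz, ← hy])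
          show z.1 (mfun x) = x.1 (mfun x)
          rw [hzy]; exact hyx
        rcases hmfun x (htX x hxt) with h | h
        · exact Or.inl (hsub.trans h)
        · exact Or.inr (hsub.trans h)
      have hA : FinConn (R M) (g ⁻¹' {a}) := hgepi.2 {a} (finConn_singleton (hrefl n) a)
      obtain ⟨b₁, hb₁, b₂, hb₂, hRb⟩ := hA
        {b : K M | g b = a ∧ {y : InvLim K f | y.1 M = b} ⊆ U₁}
        {b : K M | g b = a ∧ {y : InvLim K f | y.1 M = b} ⊆ U₂}
        (fun b hb => hb.1) (fun b hb => hb.1)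
        ⟨p₁.1 M, by
          have hg1 : g (p₁.1 M) = a := by rw [hgspec p₁]; exact hp₁X
          rcases hcylU _ hg1 with h | h
          · exact ⟨hg1, h⟩
          · exact absurd ⟨p₁, hp₁X, hp₁U, h rfl⟩ hmix⟩
        ⟨p₂.1 M, by
          have hg2 : g (p₂.1 M) = a := by rw [hgspec p₂]; exact hp₂X
          rcases hcylU _ hg2 with h | h
          · exact absurd ⟨p₂, hp₂X, h rfl, hp₂U⟩ hmix
          · exact ⟨hg2, h⟩⟩
        (by
          ext b
          constructor
          · intro hb
            rcases hcylU b hb with h | h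
            · exact Or.inl ⟨hb, h⟩
            · exact Or.inr ⟨hb, h⟩
          · rintro (⟨hb, -⟩ | ⟨hb, -⟩) <;> exact hb)
      obtain ⟨x₁, x₂, hx₁, hx₂, hlim⟩ := edge_lift hf M hRb
      exact ⟨x₁, ⟨hAX b₁ hb₁.1 hx₁, hb₁.2 hx₁⟩, x₂, ⟨hAX b₂ hb₂.1 hx₂, hb₂.2 hx₂⟩, hlim⟩
  refine ⟨part1, ?_⟩
  intro x U hU hx
  obtain ⟨m, hm⟩ := exists_cyl_subset hU hx
  exact ⟨{y : InvLim K f | y.1 m = x.1 m}, cyl_isOpen m (x.1 m), rfl, hm, part1 m (x.1 m)⟩
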